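/- Let f : {a}* → {a,b}* be the function defined by f(a^{2n}) = (ab)ⁿ and f(a^{2n+1}) = (ab)ⁿ·a·(ab)ⁿ. Then f is Reg-continuous: for every regular language L ⊆ {a,b}*, the preimage f⁻¹(L) is regular. -/

import Mathlib

/-- The two-letter alphabet `{a, b}`. -/
inductive AB : Type
  | a : AB
  | b : AB
deriving DecidableEq

/-- `wpow x k` is the `k`-fold concatenation `xᵏ` of the word `x`. -/
def wpow {A : Type*} (x : List A) : ℕ → List A
  | 0 => []
  | n + 1 => x ++ wpow x n

/-- The function `f(a^{2n}) = (ab)ⁿ` and `f(a^{2n+1}) = (ab)ⁿ·a·(ab)ⁿ`. -/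
def fMid (w : List Unit) : List AB :=
  if w.length % 2 = 0 then wpow [AB.a, AB.b] (w.length / 2)
  else wpow [AB.a, AB.b] (w.length / 2) ++ [AB.a] ++ wpow [AB.a, AB.b] (w.length / 2)

lemma evalFrom_append' {σ : Type} (M : DFA AB σ) (q : σ) (x y : List AB) :
    M.evalFrom q (x ++ y) = M.evalFrom (M.evalFrom q x) y := by
  simp [DFA.evalFrom, List.foldl_append]

lemma evalFrom_cons' {σ : Type} (M : DFA AB σ) (q : σ) (x : AB) (xs : List AB) :
    M.evalFrom q (x :: xs) = M.evalFrom (M.step q x) xs := rfl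

lemma evalFrom_wpow {σ : Type} (M : DFA AB σ) (q : σ) (k : ℕ) :
    M.evalFrom q (wpow [AB.a, AB.b] k) =
      (fun q => M.step (M.step q AB.a) AB.b)^[k] q := by
  induction k generalizing q with
  | zero => rfl
  | succ k ih =>
      show M.evalFrom q ([AB.a, AB.b] ++ wpow [AB.a, AB.b] k) = _
      rw [evalFrom_append']
      rw [ih]
      rw [Function.iterate_succ_apply]
      rfl

/-- `fMid` is Reg-continuous: the preimage of every regular language is
regular. -/
theorem fMid_reg_continuous (L : Language AB) (hL : L.IsRegular) :
    Language.IsRegular {w : List Unit | fMid w ∈ L} := by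
  obtain ⟨σ, _, M, hM⟩ := hL
  haveI : DecidableEq σ := Classical.decEq σ
  -- step function applying `ab` once
  set e : σ → σ := fun q => M.step (M.step q AB.a) AB.b with he
  -- new DFA over Unit
  let N : DFA Unit ((σ → σ) × Bool) :=
    { step := fun p _ => if p.2 then (e ∘ p.1, false) else (p.1, true)
      start := (id, false)
      accept := {p | if p.2 then p.1 (M.step (p.1 M.start) AB.a) ∈ M.accept
                     else p.1 M.start ∈ M.accept} }
  refine ⟨(σ → σ) × Bool, inferInstance, N, ?_⟩
  have key : ∀ n : ℕ, N.eval (List.replicate n ()) = (e^[n / 2], decide (n % 2 = 1)) := by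
    intro n
    induction n with
    | zero => rfl
    | succ n ih =>
        rw [List.replicate_succ', DFA.eval_append_singleton, ih]
        rcases Nat.even_or_odd n with ⟨m, hm⟩ | ⟨m, hm⟩
        · subst hm
          have h1 : (m + m) % 2 = 0 := by omega
          have h2 : (m + m + 1) % 2 = 1 := by omega
          have h3 : (m + m + 1) / 2 = (m + m) / 2 := by omega
          simp [N, h1, h2, h3]
        · subst hm
          have h1 : (2 * m + 1) % 2 = 1 := by omega
          have h2 : (2 * m + 1 + 1) % 2 = 0 := by omega
          have h3 : (2 * m + 1 + 1) / 2 = (2 * m + 1) / 2 + 1 := by omega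
          have h4 : e ∘ e^[(2 * m + 1) / 2] = e^[(2 * m + 1) / 2 + 1] := by
            rw [Function.iterate_succ']
          simp [N, h1, h2, h3, h4]
  ext w
  have hw : w = List.replicate w.length () :=
    List.eq_replicate_length.mpr (fun b _ => rfl)
  have hmem : w ∈ N.accepts ↔ N.eval w ∈ N.accept := Iff.rfl
  show w ∈ N.accepts ↔ fMid w ∈ L
  rw [← hM, hmem]
  conv_lhs => rw [hw]
  rw [key w.length]
  by_cases hp : w.length % 2 = 0
  · have hp' : ¬ w.length % 2 = 1 := by omega
    simp [N, fMid, hp, hp', DFA.mem_accepts, DFA.eval, evalFrom_wpow, ← he]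
  · have hp' : w.length % 2 = 1 := by omega
    simp [N, fMid, hp, hp', DFA.mem_accepts, DFA.eval, evalFrom_append', evalFrom_cons', evalFrom_wpow, ← he]
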